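/- For n ≥ 4 and {p,q} = {0,1}, the word u = q p^{n−3} q p satisfies D_2(p^{n−1} q) ⊆ D_2(u), i.e., u is 2-dominant over p^{n−1} q. -/

import Mathlib

/-- The set of subsequences of `u` of length `u.length - t`. -/
def Dset (t : ℕ) (u : List Bool) : Set (List Bool) :=
  {w | w.Sublist u ∧ w.length = u.length - t}

theorem two_dominant_family_four (n : ℕ) (hn : 4 ≤ n) (p q : Bool) (hpq : p ≠ q) :
    Dset 2 (List.replicate (n - 1) p ++ [q]) ⊆
      Dset 2 ([q] ++ List.replicate (n - 3) p ++ [q, p]) := by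
  obtain ⟨m, rfl⟩ : ∃ m, n = m + 4 := ⟨n - 4, by omega⟩
  rintro w ⟨hsub, hlen⟩
  have h1 : m + 4 - 1 = m + 3 := rfl
  have h3 : m + 4 - 3 = m + 1 := rfl
  rw [h1] at hsub hlen
  rw [h3]
  simp only [List.length_append, List.length_replicate, List.length_cons,
    List.length_nil] at hlen ⊢
  rw [List.sublist_append_iff] at hsub
  obtain ⟨w₁, w₂, rfl, hs1, hs2⟩ := hsub
  rw [List.sublist_replicate_iff] at hs1
  obtain ⟨k, hk, rfl⟩ := hs1
  rw [List.sublist_singleton] at hs2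
  simp only [List.length_append, List.length_replicate] at hlen
  rcases hs2 with rfl | rfl
  · -- w₂ = [], k = m + 2
    simp only [List.length_nil] at hlen
    have hk2 : k = m + 2 := by omega
    subst hk2
    refine ⟨?_, by simp⟩
    rw [List.append_nil, show m + 2 = m + 1 + 1 from rfl, List.replicate_succ' (n := m+1) (a := p)]
    exact ((List.Sublist.refl _).append (by simp)).cons q
  · -- w₂ = [q], k = m + 1
    simp only [List.length_cons, List.length_nil] at hlen
    have hk2 : k = m + 1 := by omega
    subst hk2
    refine ⟨?_, by simp⟩
    exact ((List.Sublist.refl _).append (by simp)).cons q
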